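/- Let p, p̄ be probability measures on Z, both absolutely continuous with respect to p̂ with KL(p‖p̂) < ∞ and KL(p̄‖p̂) < ∞, let φ = (φ₁,…,φ_d) : Z → ℝ^d be bounded measurable, β > 0, and ψ ∈ ℝ^d. Assume KL(p̄‖p̂) + (1/β²)·‖∫ φ dp̄ − ψ‖₂² ≤ KL(p‖p̂) + (1/β²)·‖∫ φ dp − ψ‖₂². Then ∑_{i=1}^d |∫ φᵢ dp̄ − ∫ φᵢ dp| ≤ √d · (2·‖∫ φ dp − ψ‖₂ + β·√(KL(p‖p̂))). -/

import Mathlib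

open MeasureTheory

lemma KLm_nonneg' {Z : Type*} [MeasurableSpace Z] (p q : Measure Z)
    [IsProbabilityMeasure p] [IsProbabilityMeasure q] (hac : p ≪ q)
    (hint : Integrable (fun z => Real.log ((p.rnDeriv q z).toReal)) p) :
    0 ≤ ∫ z, Real.log ((p.rnDeriv q z).toReal) ∂p := by
  set f := p.rnDeriv q with hf
  have hg_meas : Measurable fun z => (f z)⁻¹ := (Measure.measurable_rnDeriv p q).inv
  have hlint : ∫⁻ z, (f z)⁻¹ ∂p ≤ 1 := by
    rw [← lintegral_rnDeriv_mul hac hg_meas.aemeasurable]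
    calc ∫⁻ z, f z * (f z)⁻¹ ∂q ≤ ∫⁻ _, 1 ∂q :=
          lintegral_mono fun z => ENNReal.mul_inv_le_one _
      _ = 1 := by simp
  have hpos : ∀ᵐ z ∂p, 0 < f z := Measure.rnDeriv_pos hac
  have hlt : ∀ᵐ z ∂p, f z < ⊤ := hac.ae_le (Measure.rnDeriv_lt_top p q)
  have hgint : Integrable (fun z => ((f z)⁻¹).toReal) p :=
    integrable_toReal_of_lintegral_ne_top hg_meas.aemeasurable
      (lt_of_le_of_lt hlint ENNReal.one_lt_top).ne
  have hgval : ∫ z, ((f z)⁻¹).toReal ∂p ≤ 1 := by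
    rw [integral_toReal hg_meas.aemeasurable
      (hpos.mono fun z hz => by simp [ENNReal.inv_lt_top, hz])]
    exact ENNReal.toReal_le_of_le_ofReal one_pos.le (by simpa using hlint)
  have hptwise : ∀ᵐ z ∂p, 1 - ((f z)⁻¹).toReal ≤ Real.log ((f z).toReal) := by
    filter_upwards [hpos, hlt] with z hz hz'
    have hx : 0 < (f z).toReal := ENNReal.toReal_pos hz.ne' hz'.ne
    have := Real.log_le_sub_one_of_pos (inv_pos.mpr hx)
    rw [Real.log_inv] at this
    rw [ENNReal.toReal_inv]
    linarith
  have h1 : ∫ z, (1 - ((f z)⁻¹).toReal) ∂p ≤ ∫ z, Real.log ((f z).toReal) ∂p :=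
    integral_mono_ae ((integrable_const 1).sub hgint) hint hptwise
  have h2 : ∫ z, (1 - ((f z)⁻¹).toReal) ∂p = 1 - ∫ z, ((f z)⁻¹).toReal ∂p := by
    rw [integral_sub (integrable_const 1) hgint]; simp
  linarith

lemma sum_abs_le_sqrt_card_mul {d : ℕ} (x : Fin d → ℝ) :
    ∑ i, |x i| ≤ Real.sqrt d * Real.sqrt (∑ i, (x i) ^ 2) := by
  have h := Finset.sum_mul_sq_le_sq_mul_sq Finset.univ (fun _ => (1 : ℝ)) (fun i => |x i|)
  simp only [one_mul, one_pow, Finset.sum_const, Finset.card_univ, Fintype.card_fin,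
    nsmul_eq_mul, mul_one, sq_abs] at h
  have hnn : 0 ≤ ∑ i, |x i| := Finset.sum_nonneg fun i _ => abs_nonneg _
  calc ∑ i, |x i| = Real.sqrt ((∑ i, |x i|) ^ 2) := (Real.sqrt_sq hnn).symm
    _ ≤ Real.sqrt ((d : ℝ) * ∑ i, (x i) ^ 2) := Real.sqrt_le_sqrt h
    _ = Real.sqrt d * Real.sqrt (∑ i, (x i) ^ 2) := Real.sqrt_mul (Nat.cast_nonneg d) _

lemma sqrt_sum_sq_sub_le {d : ℕ} (a b : Fin d → ℝ) :
    Real.sqrt (∑ i, (a i - b i) ^ 2) ≤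
      Real.sqrt (∑ i, (a i) ^ 2) + Real.sqrt (∑ i, (b i) ^ 2) := by
  set sa := Real.sqrt (∑ i, (a i) ^ 2)
  set sb := Real.sqrt (∑ i, (b i) ^ 2)
  have hsa : sa ^ 2 = ∑ i, (a i) ^ 2 :=
    Real.sq_sqrt (Finset.sum_nonneg fun i _ => sq_nonneg _)
  have hsb : sb ^ 2 = ∑ i, (b i) ^ 2 :=
    Real.sq_sqrt (Finset.sum_nonneg fun i _ => sq_nonneg _)
  have hcs : (∑ i, a i * b i) ^ 2 ≤ (∑ i, (a i) ^ 2) * (∑ i, (b i) ^ 2) :=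
    Finset.sum_mul_sq_le_sq_mul_sq Finset.univ a b
  have hsa0 : 0 ≤ sa := Real.sqrt_nonneg _
  have hsb0 : 0 ≤ sb := Real.sqrt_nonneg _
  have hab : ∑ i, a i * b i ≤ sa * sb := by
    nlinarith [abs_nonneg (∑ i, a i * b i), sq_abs (∑ i, a i * b i),
      le_abs_self (∑ i, a i * b i), mul_nonneg hsa0 hsb0]
  have hexp : ∑ i, (a i - b i) ^ 2 ≤ (sa + sb) ^ 2 := by
    have : ∑ i, (a i - b i) ^ 2 =
        (∑ i, (a i) ^ 2) - 2 * (∑ i, a i * b i) + ∑ i, (b i) ^ 2 := by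
      rw [Finset.mul_sum, ← Finset.sum_sub_distrib, ← Finset.sum_add_distrib]
      exact Finset.sum_congr rfl fun i _ => by ring
    nlinarith [hsa, hsb, hab, mul_nonneg hsa0 hsb0]
  calc Real.sqrt (∑ i, (a i - b i) ^ 2) ≤ Real.sqrt ((sa + sb) ^ 2) :=
        Real.sqrt_le_sqrt hexp
    _ = sa + sb := Real.sqrt_sq (by linarith)
lemma stmt11_helper {d : ℕ} (A B : Fin d → ℝ) (K KL' β : ℝ) (hK0 : 0 ≤ K) (hKL' : 0 ≤ KL')
    (hβ : 0 < β)
    (hobj : KL' + (1 / β ^ 2) * (∑ i, (A i) ^ 2) ≤ K + (1 / β ^ 2) * (∑ i, (B i) ^ 2)) :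
    ∑ i, |A i - B i| ≤ Real.sqrt d * (2 * Real.sqrt (∑ i, (B i) ^ 2) + β * Real.sqrt K) := by
  have hβ2 : (0:ℝ) < β ^ 2 := by positivity
  have hSA : ∑ i, (A i) ^ 2 ≤ ∑ i, (B i) ^ 2 + β ^ 2 * K := by
    have h3 : (1 / β ^ 2) * (∑ i, (A i) ^ 2) ≤ K + (1 / β ^ 2) * (∑ i, (B i) ^ 2) := by
      linarith
    have h4 := mul_le_mul_of_nonneg_left h3 hβ2.le
    have e1 : β ^ 2 * ((1 / β ^ 2) * (∑ i, (A i) ^ 2)) = ∑ i, (A i) ^ 2 := by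
      field_simp
    have e2 : β ^ 2 * (K + (1 / β ^ 2) * (∑ i, (B i) ^ 2)) = β ^ 2 * K + ∑ i, (B i) ^ 2 := by
      field_simp
    rw [e1, e2] at h4
    linarith
  set sa := Real.sqrt (∑ i, (A i) ^ 2) with hsa
  set sb := Real.sqrt (∑ i, (B i) ^ 2) with hsb
  set sk := Real.sqrt K with hsk
  have hsa2 : sa ^ 2 = ∑ i, (A i) ^ 2 :=
    Real.sq_sqrt (Finset.sum_nonneg fun i _ => sq_nonneg _)
  have hsb2 : sb ^ 2 = ∑ i, (B i) ^ 2 :=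
    Real.sq_sqrt (Finset.sum_nonneg fun i _ => sq_nonneg _)
  have hsk2 : sk ^ 2 = K := Real.sq_sqrt hK0
  have hsb0 : 0 ≤ sb := Real.sqrt_nonneg _
  have hsk0 : 0 ≤ sk := Real.sqrt_nonneg _
  have hsa_le : sa ≤ sb + β * sk := by
    have h1 : ∑ i, (A i) ^ 2 ≤ (sb + β * sk) ^ 2 := by
      nlinarith [mul_nonneg (mul_nonneg hβ.le hsb0) hsk0]
    calc sa ≤ Real.sqrt ((sb + β * sk) ^ 2) := Real.sqrt_le_sqrt h1
      _ = sb + β * sk := Real.sqrt_sq (by positivity)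
  calc ∑ i, |A i - B i| ≤ Real.sqrt d * Real.sqrt (∑ i, (A i - B i) ^ 2) :=
        sum_abs_le_sqrt_card_mul _
    _ ≤ Real.sqrt d * (sa + sb) :=
        mul_le_mul_of_nonneg_left (sqrt_sum_sq_sub_le A B) (Real.sqrt_nonneg _)
    _ ≤ Real.sqrt d * (2 * sb + β * sk) :=
        mul_le_mul_of_nonneg_left (by linarith) (Real.sqrt_nonneg _)

/-- Kullback–Leibler divergence `KL(p‖q) = ∫ log (dp/dq) dp`. -/
noncomputable def KLm {Z : Type*} [MeasurableSpace Z] (p q : Measure Z) : ℝ :=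
  ∫ z, Real.log ((p.rnDeriv q z).toReal) ∂p

theorem stmt11 {Z : Type*} [MeasurableSpace Z] (phat : Measure Z) [IsProbabilityMeasure phat]
    {d : ℕ} (φ : Z → Fin d → ℝ) (hφm : Measurable φ)
    (C : ℝ) (hφb : ∀ z i, |φ z i| ≤ C)
    (p pbar : Measure Z) [IsProbabilityMeasure p] [IsProbabilityMeasure pbar]
    (hacp : p ≪ phat) (hacpbar : pbar ≪ phat)
    (hKLfinp : Integrable (fun z => Real.log ((p.rnDeriv phat z).toReal)) p)
    (hKLfinpbar : Integrable (fun z => Real.log ((pbar.rnDeriv phat z).toReal)) pbar)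
    (β : ℝ) (hβ : 0 < β) (ψ : Fin d → ℝ)
    (hobj : KLm pbar phat + (1 / β ^ 2) * (∑ i, ((∫ z, φ z i ∂pbar) - ψ i) ^ 2) ≤
      KLm p phat + (1 / β ^ 2) * (∑ i, ((∫ z, φ z i ∂p) - ψ i) ^ 2)) :
    ∑ i, |(∫ z, φ z i ∂pbar) - ∫ z, φ z i ∂p| ≤
      Real.sqrt d *
        (2 * Real.sqrt (∑ i, ((∫ z, φ z i ∂p) - ψ i) ^ 2) +
          β * Real.sqrt (KLm p phat)) := by
  have hK0 : 0 ≤ KLm p phat := KLm_nonneg' p phat hacp hKLfinp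
  have hK0' : 0 ≤ KLm pbar phat := KLm_nonneg' pbar phat hacpbar hKLfinpbar
  have goalEq : ∀ i : Fin d, |(∫ z, φ z i ∂pbar) - ∫ z, φ z i ∂p| =
      |((∫ z, φ z i ∂pbar) - ψ i) - ((∫ z, φ z i ∂p) - ψ i)| := fun i => by
    congr 1; ring
  calc ∑ i, |(∫ z, φ z i ∂pbar) - ∫ z, φ z i ∂p|
      = ∑ i, |((∫ z, φ z i ∂pbar) - ψ i) - ((∫ z, φ z i ∂p) - ψ i)| :=
        Finset.sum_congr rfl fun i _ => goalEq i
    _ ≤ _ := stmt11_helper (fun i => (∫ z, φ z i ∂pbar) - ψ i)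
        (fun i => (∫ z, φ z i ∂p) - ψ i) (KLm p phat) (KLm pbar phat) β hK0 hK0' hβ hobj
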